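/- Let N ≥ 1 be an integer, let i be an integer with 0 ≤ i ≤ N−1, and let A, B > 0 be reals with |1 − B/A| < 1. Then ∫_0^∞ e^{−(A−B)x} · x^{2N−i−2} · Γ(i−N+1, B·x) dx = B^{i+1−N} · A^{−N} · Γ(N)/(2N−i−1) · ₂F₁(1, N; 2N−i; 1 − B/A), where Γ(α,z) = ∫_z^∞ t^{α−1}e^{−t} dt (defined for any real α and z > 0). -/

import Mathlib

open MeasureTheory

/-- The upper incomplete gamma function `Γ(a, z) = ∫_z^∞ t^(a-1) e^(-t) dt`,
which converges for every real `a` when `z > 0`. -/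
noncomputable def upperGamma (a z : ℝ) : ℝ :=
  ∫ t in Set.Ioi z, t ^ (a - 1) * Real.exp (-t)

/-- The Pochhammer symbol (rising factorial) `(x)_k = x(x+1)⋯(x+k−1)`. -/
noncomputable def poch (x : ℝ) (k : ℕ) : ℝ :=
  ∏ j ∈ Finset.range k, (x + (j : ℝ))

/-- The Gauss hypergeometric series `₂F₁(a,b;c;z) = Σ_k (a)_k (b)_k/((c)_k k!) z^k`. -/
noncomputable def hyp2F1 (a b c z : ℝ) : ℝ :=
  ∑' k : ℕ, poch a k * poch b k / (poch c k * (Nat.factorial k : ℝ)) * z ^ k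

section helpers

open Set

lemma poch_succ (x : ℝ) (k : ℕ) : poch x (k+1) = poch x k * (x + k) :=
  Finset.prod_range_succ _ _

lemma poch_succ' (x : ℝ) (k : ℕ) : poch x (k+1) = x * poch (x+1) k := by
  rw [poch, Finset.prod_range_succ']
  simp only [Nat.cast_zero, add_zero, mul_comm, poch]
  congr 1
  exact Finset.prod_congr rfl (fun j _ => by push_cast; ring)

lemma poch_pos {x : ℝ} (hx : 0 < x) (k : ℕ) : 0 < poch x k :=
  Finset.prod_pos (fun j _ => by positivity)

lemma poch_one (k : ℕ) : poch 1 k = (Nat.factorial k : ℝ) := by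
  rw [poch, ← Finset.prod_range_add_one_eq_factorial k]
  push_cast
  exact Finset.prod_congr rfl (fun j _ => by ring)

lemma fact_mul_prod (M : ℕ) (k : ℕ) :
    (M.factorial : ℕ) * ∏ j ∈ Finset.range k, (M + 1 + j) = (M + k).factorial := by
  induction k with
  | zero => simp
  | succ k ih =>
    rw [Finset.prod_range_succ, ← mul_assoc, ih, ← Nat.add_assoc, Nat.factorial_succ]
    ring

lemma poch_nat_cast (M k : ℕ) :
    poch ((M : ℝ) + 1) k = ((k + M).choose M : ℝ) * (Nat.factorial k : ℝ) := by
  have hM : (M.factorial : ℝ) ≠ 0 := by positivity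
  apply mul_left_cancel₀ hM
  have h1 : (M.factorial : ℝ) * poch ((M:ℝ)+1) k = ((M+k).factorial : ℝ) := by
    rw [poch]
    rw [show ∏ j ∈ Finset.range k, ((M:ℝ) + 1 + (j:ℝ)) =
      ((∏ j ∈ Finset.range k, (M + 1 + j) : ℕ) : ℝ) by push_cast; ring_nf]
    exact_mod_cast congrArg (Nat.cast (R := ℝ)) (fact_mul_prod M k)
  have h2 : ((k + M).choose M * M.factorial * k.factorial : ℕ) = ((k + M).factorial : ℕ) := by
    have := Nat.choose_mul_factorial_mul_factorial (Nat.le_add_left M k)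
    simpa using this
  have h2' : (((k + M).choose M : ℝ)) * (M.factorial : ℝ) * (k.factorial : ℝ) = ((k + M).factorial : ℝ) := by
    exact_mod_cast congrArg (Nat.cast (R := ℝ)) h2
  rw [h1, show M + k = k + M from Nat.add_comm M k, ← h2']
  ring

lemma sum_choose_inv : ∀ (k : ℕ) (m : ℝ), 0 < m →
    ∑ j ∈ Finset.range (k+1), ((k.choose j : ℝ) * (-1)^j / (m + j)) =
      (Nat.factorial k : ℝ) / poch m (k+1) := by
  intro k
  induction k with
  | zero =>
    intro m hm
    rw [Finset.sum_range_one]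
    simp [poch, Finset.prod_range_one]
  | succ k ih =>
    intro m hm
    have key : ∑ j ∈ Finset.range (k+2), (((k+1).choose j : ℝ) * (-1)^j / (m + j)) =
        (∑ j ∈ Finset.range (k+1), ((k.choose j : ℝ) * (-1)^j / (m + j)))
        - (∑ j ∈ Finset.range (k+1), ((k.choose j : ℝ) * (-1)^j / ((m+1) + j))) := by
      have split : ∀ j ∈ Finset.range (k+2), (((k+1).choose j : ℝ) * (-1)^j / (m + j)) =
          ((k.choose j : ℝ) * (-1)^j / (m + j)) +
          (if j = 0 then 0 else ((k.choose (j-1) : ℝ) * (-1)^j / (m + j))) := by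
        intro j _
        rcases j with _ | j
        · simp
        · rw [if_neg (Nat.succ_ne_zero j), Nat.choose_succ_succ, Nat.succ_sub_one]
          push_cast
          ring
      rw [Finset.sum_congr rfl split, Finset.sum_add_distrib, sub_eq_add_neg]
      congr 1
      · rw [Finset.sum_range_succ, Nat.choose_succ_self]
        simp
      · rw [Finset.sum_range_succ'
          (fun j => if j = 0 then (0:ℝ) else ((k.choose (j-1) : ℝ) * (-1)^j / (m + j))) (k+1)]
        rw [if_pos rfl, add_zero, ← Finset.sum_neg_distrib]
        refine Finset.sum_congr rfl (fun j _ => ?_)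
        rw [if_neg (Nat.succ_ne_zero j), Nat.succ_sub_one]
        push_cast
        ring
    rw [key, ih m hm, ih (m+1) (by linarith)]
    have h1 : poch m (k+2) = m * poch (m+1) k * (m + (k+1)) := by
      rw [poch_succ, poch_succ']
      push_cast
      ring
    have h2 : poch m (k+1) = m * poch (m+1) k := poch_succ' m k
    have h3 : poch (m+1) (k+1) = poch (m+1) k * ((m+1) + k) := poch_succ _ _
    have hp : 0 < poch (m+1) k := poch_pos (by linarith) k
    rw [h1, h2, h3, Nat.factorial_succ]
    push_cast
    field_simp
    ring

lemma ug_integrand_integrableOn {a z : ℝ} (ha : a ≤ 1) (hz : 0 < z) :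
    IntegrableOn (fun t => t ^ (a - 1) * Real.exp (-t)) (Ioi z) := by
  have hexp : IntegrableOn (fun t : ℝ => Real.exp (-t)) (Ioi z) := by
    simpa using exp_neg_integrableOn_Ioi z zero_lt_one
  refine Integrable.mono' (hexp.const_mul (z ^ (a-1))) ?_ ?_
  · exact Measurable.aestronglyMeasurable (by fun_prop)
  · filter_upwards [ae_restrict_mem measurableSet_Ioi] with t ht
    have ht0 : 0 < t := hz.trans ht
    rw [Real.norm_eq_abs, abs_of_nonneg (by positivity)]
    have : t ^ (a-1) ≤ z ^ (a-1) :=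
      Real.rpow_le_rpow_of_nonpos hz ht.le (by linarith)
    exact mul_le_mul_of_nonneg_right this (Real.exp_pos _).le

lemma upperGamma_nonneg {a z : ℝ} (hz : 0 ≤ z) : 0 ≤ upperGamma a z := by
  refine setIntegral_nonneg measurableSet_Ioi (fun t ht => ?_)
  have : (0:ℝ) ≤ t := hz.trans (le_of_lt ht)
  positivity

lemma upperGamma_antitoneOn {a : ℝ} (ha : a ≤ 1) : AntitoneOn (upperGamma a) (Ioi 0) := by
  intro z₁ h1 z₂ _ h12
  refine setIntegral_mono_set (ug_integrand_integrableOn ha h1) ?_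
    ((Ioi_subset_Ioi h12).eventuallyLE)
  filter_upwards [ae_restrict_mem measurableSet_Ioi] with t ht
  have ht0 : (0:ℝ) < t := lt_trans h1 ht
  positivity

lemma upperGamma_rep (a : ℝ) {c : ℝ} (hc : 0 < c) :
    upperGamma a c = c ^ a * ∫ u in Ioi (1:ℝ), u ^ (a-1) * Real.exp (-(c*u)) := by
  have key := integral_comp_mul_left_Ioi (fun t => t ^ (a-1) * Real.exp (-t)) 1 hc
  rw [mul_one, smul_eq_mul] at key
  have h2 : upperGamma a c = c * ∫ u in Ioi (1:ℝ), (c*u) ^ (a-1) * Real.exp (-(c*u)) := by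
    rw [upperGamma, key, ← mul_assoc, mul_inv_cancel₀ hc.ne', one_mul]
  rw [h2]
  have h3 : ∫ u in Ioi (1:ℝ), (c*u) ^ (a-1) * Real.exp (-(c*u)) =
      c ^ (a-1) * ∫ u in Ioi (1:ℝ), u ^ (a-1) * Real.exp (-(c*u)) := by
    rw [← integral_const_mul]
    refine setIntegral_congr_fun measurableSet_Ioi (fun u hu => ?_)
    rw [Real.mul_rpow hc.le (by linarith [mem_Ioi.mp hu] : (0:ℝ) ≤ u)]
    ring
  rw [h3, ← mul_assoc, show a = 1 + (a-1) by ring, Real.rpow_add hc, Real.rpow_one]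
  ring_nf

set_option maxHeartbeats 1000000 in
lemma main_general (n : ℕ) (hn : 1 ≤ n) (a : ℝ) (ha : a ≤ 0)
    (A B : ℝ) (hA : 0 < A) (hB : 0 < B) (hz1 : |1 - B / A| < 1) :
    (∫ x in Ioi (0:ℝ),
        Real.exp (-(A - B) * x) * x ^ ((n:ℝ) - a - 1) * upperGamma a (B * x)) =
      B ^ a * A ^ (-(n:ℝ)) * Real.Gamma n / ((n:ℝ) - a) *
        ∑' k : ℕ, poch (n:ℝ) k / poch ((n:ℝ) - a + 1) k * (1 - B / A) ^ k := by
  have hn1 : (1:ℝ) ≤ (n:ℝ) := by exact_mod_cast hn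
  have hn0 : (0:ℝ) < (n:ℝ) := by linarith
  set z : ℝ := 1 - B / A with hzdef
  have hm0 : 0 < (n:ℝ) - a := by linarith
  set g : ℝ → ℝ → ℝ := fun x u =>
    B ^ a * (x ^ ((n:ℝ) - 1) * Real.exp (-((A - B + B * u) * x))) * u ^ (a - 1) with hgdef
  set φ : ℝ → ℝ := fun u => u ^ (a - 1) * (1 / (A - B + B * u)) ^ n with hφdef
  have hc : ∀ u : ℝ, 1 < u → 0 < A - B + B * u := fun u hu => by nlinarith
  -- step 1 : section in u
  have step1 : ∀ x ∈ Ioi (0:ℝ),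
      Real.exp (-(A - B) * x) * x ^ ((n:ℝ) - a - 1) * upperGamma a (B * x)
        = ∫ u in Ioi (1:ℝ), g x u := by
    intro x hx
    have hx0 : (0:ℝ) < x := hx
    have hBx : 0 < B * x := by positivity
    rw [upperGamma_rep a hBx,
      show Real.exp (-(A - B) * x) * x ^ ((n:ℝ) - a - 1) *
          ((B*x) ^ a * ∫ u in Ioi (1:ℝ), u ^ (a-1) * Real.exp (-(B*x*u))) =
        ∫ u in Ioi (1:ℝ), (Real.exp (-(A - B) * x) * x ^ ((n:ℝ) - a - 1) * (B*x) ^ a) *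
          (u ^ (a-1) * Real.exp (-(B*x*u))) from by rw [integral_const_mul]; ring]
    refine setIntegral_congr_fun measurableSet_Ioi (fun u hu => ?_)
    have e1 : x ^ ((n:ℝ) - 1) = x ^ ((n:ℝ) - a - 1) * x ^ a := by
      rw [← Real.rpow_add hx0]; congr 1; ring
    have e2 : Real.exp (-((A - B + B * u) * x)) =
        Real.exp (-(A - B) * x) * Real.exp (-(B*x*u)) := by
      rw [← Real.exp_add]; congr 1; ring
    simp only [hgdef]
    rw [e1, e2, Real.mul_rpow hB.le hx0.le]
    ring
  -- step 2 : integrability of u-sections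
  have step2 : ∀ x ∈ Ioi (0:ℝ), IntegrableOn (fun u => g x u) (Ioi 1) := by
    intro x hx
    have hx0 : (0:ℝ) < x := hx
    have hBx : 0 < B * x := by positivity
    refine Integrable.mono'
      ((exp_neg_integrableOn_Ioi 1 hBx).const_mul
        (B ^ a * x ^ ((n:ℝ)-1) * Real.exp (-(A-B)*x))) ?_ ?_
    · exact Measurable.aestronglyMeasurable (by fun_prop)
    · filter_upwards [ae_restrict_mem measurableSet_Ioi] with u hu
      have hu1 : (1:ℝ) < u := hu
      have hu0 : (0:ℝ) < u := by linarith
      have e2 : Real.exp (-((A - B + B * u) * x)) =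
          Real.exp (-(A-B)*x) * Real.exp (-(B*x)*u) := by
        rw [← Real.exp_add]; congr 1; ring
      have h3 : u ^ (a-1) ≤ 1 :=
        Real.rpow_le_one_of_one_le_of_nonpos hu1.le (by linarith)
      simp only [hgdef]
      rw [Real.norm_eq_abs, abs_of_nonneg (by positivity), e2]
      calc B ^ a * (x ^ ((n:ℝ)-1) * (Real.exp (-(A-B)*x) * Real.exp (-(B*x)*u))) * u ^ (a-1)
          ≤ B ^ a * (x ^ ((n:ℝ)-1) * (Real.exp (-(A-B)*x) * Real.exp (-(B*x)*u))) * 1 := by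
            gcongr
        _ = B ^ a * x ^ ((n:ℝ)-1) * Real.exp (-(A-B)*x) * Real.exp (-(B*x)*u) := by ring
  -- step 3 : value of x-sections
  have step3 : ∀ u ∈ Ioi (1:ℝ),
      (∫ x in Ioi (0:ℝ), g x u) = (B ^ a * Real.Gamma n) * φ u := by
    intro u hu
    have hcu0 : 0 < A - B + B * u := hc u hu
    have e0 : (∫ x in Ioi (0:ℝ), g x u) =
        (B ^ a * u ^ (a-1)) * ∫ x in Ioi (0:ℝ),
          x ^ ((n:ℝ)-1) * Real.exp (-((A - B + B * u) * x)) := by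
      rw [← integral_const_mul]
      exact setIntegral_congr_fun measurableSet_Ioi (fun x _ => by simp only [hgdef]; ring)
    rw [e0, Real.integral_rpow_mul_exp_neg_mul_Ioi hn0 hcu0]
    simp only [hφdef]
    rw [Real.rpow_natCast]
    ring
  -- step 4 : integrability of x-sections
  have step4 : ∀ u ∈ Ioi (1:ℝ), IntegrableOn (fun x => g x u) (Ioi 0) := by
    intro u hu
    have hcu0 : 0 < A - B + B * u := hc u hu
    have base : IntegrableOn (fun x : ℝ => Real.exp (-x) * x ^ ((n:ℝ)-1)) (Ioi 0) :=
      Real.GammaIntegral_convergent hn0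
    have hcomp : IntegrableOn
        (fun x : ℝ => Real.exp (-((A-B+B*u)*x)) * ((A-B+B*u)*x) ^ ((n:ℝ)-1)) (Ioi 0) := by
      have := (integrableOn_Ioi_comp_mul_left_iff
        (fun t : ℝ => Real.exp (-t) * t ^ ((n:ℝ)-1)) 0 hcu0).2
      rw [mul_zero] at this
      exact this base
    have : IntegrableOn (fun x : ℝ =>
        (B ^ a * u ^ (a-1) * ((A-B+B*u)) ^ (1 - (n:ℝ))) *
          (Real.exp (-((A-B+B*u)*x)) * ((A-B+B*u)*x) ^ ((n:ℝ)-1))) (Ioi 0) :=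
      hcomp.const_mul _
    refine this.congr_fun (fun x hx => ?_) measurableSet_Ioi
    have hx0 : (0:ℝ) < x := hx
    beta_reduce; rw [Real.mul_rpow hcu0.le hx0.le]
    simp only [hgdef]
    have e3 : (A-B+B*u) ^ (1 - (n:ℝ)) * (A-B+B*u) ^ ((n:ℝ) - 1) = 1 := by
      rw [← Real.rpow_add hcu0]; norm_num
    linear_combination (B ^ a * u ^ (a-1) * Real.exp (-((A-B+B*u)*x)) * x ^ ((n:ℝ)-1)) * e3
  -- φ nonneg and integrable
  have hφ_nonneg : ∀ u : ℝ, 1 < u → 0 ≤ φ u := by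
    intro u hu
    have h := hc u hu
    have hu0 : (0:ℝ) < u := by linarith
    simp only [hφdef]
    positivity
  have hφ_int : IntegrableOn φ (Ioi 1) := by
    have hm00 : 0 < min A B := lt_min hA hB
    refine Integrable.mono'
      ((integrableOn_Ioi_rpow_of_lt (show (-2:ℝ) < -1 by norm_num) one_pos).const_mul
        ((1/min A B)^n)) ?_ ?_
    · exact Measurable.aestronglyMeasurable (by fun_prop)
    · filter_upwards [ae_restrict_mem measurableSet_Ioi] with u hu
      have hu1 : (1:ℝ) < u := hu
      have hu0 : (0:ℝ) < u := by linarith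
      have hcu0 := hc u hu1
      rw [Real.norm_eq_abs, abs_of_nonneg (hφ_nonneg u hu1)]
      have hb1 : min A B * u ≤ A - B + B*u := by
        rcases le_total A B with h | h
        · rw [min_eq_left h]; nlinarith
        · rw [min_eq_right h]; nlinarith
      have h1 : u ^ (a-1) ≤ u⁻¹ := by
        rw [← Real.rpow_neg_one u]
        exact Real.rpow_le_rpow_of_exponent_le hu1.le (by linarith)
      have h2 : (1/(A-B+B*u))^n ≤ (1/(min A B * u))^n := by
        have := one_div_le_one_div_of_le (by positivity : (0:ℝ) < min A B * u) hb1
        gcongr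
      have h3 : (1/(min A B * u))^n = (1/min A B)^n * (1/u)^n := by
        rw [← mul_pow]; congr 1; field_simp
      have h4 : (1/u)^n ≤ 1/u := by
        apply pow_le_of_le_one (by positivity) (by rw [div_le_one hu0]; linarith)
        omega
      have h5 : u ^ (-2:ℝ) = u⁻¹ * u⁻¹ := by
        rw [show (-2:ℝ) = (-1) + (-1) by norm_num, Real.rpow_add hu0, Real.rpow_neg_one]
      calc φ u = u ^ (a-1) * (1/(A-B+B*u))^n := by simp only [hφdef]
        _ ≤ u⁻¹ * ((1/min A B)^n * (1/u)) := by
            refine mul_le_mul h1 (le_trans h2 ?_) (by positivity) (by positivity)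
            rw [h3]
            exact mul_le_mul_of_nonneg_left h4 (by positivity)
        _ = (1/min A B)^n * u ^ (-2:ℝ) := by rw [h5, one_div]; ring
  -- nonnegativity of g
  have hg_nonneg : ∀ x ∈ Ioi (0:ℝ), ∀ u ∈ Ioi (1:ℝ), 0 ≤ g x u := by
    intro x hx u hu
    have hx0 : (0:ℝ) < x := hx
    have hu0 : (0:ℝ) < u := lt_trans one_pos hu
    simp only [hgdef]
    positivity
  -- Tonelli
  have hgm : AEMeasurable (Function.uncurry fun x u : ℝ => ENNReal.ofReal (g x u))
      ((volume.restrict (Ioi 0)).prod (volume.restrict (Ioi 1))) := by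
    apply Measurable.aemeasurable
    simp only [hgdef, Function.uncurry]
    fun_prop
  have swap := lintegral_lintegral_swap hgm
  have E1 : ∫⁻ x in Ioi (0:ℝ), ∫⁻ u in Ioi (1:ℝ), ENNReal.ofReal (g x u) =
      ∫⁻ x in Ioi (0:ℝ), ENNReal.ofReal
        (Real.exp (-(A - B) * x) * x ^ ((n:ℝ) - a - 1) * upperGamma a (B * x)) := by
    refine lintegral_congr_ae ?_
    filter_upwards [ae_restrict_mem measurableSet_Ioi] with x hx
    rw [← ofReal_integral_eq_lintegral_ofReal (step2 x hx) ?_, ← step1 x hx]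
    filter_upwards [ae_restrict_mem measurableSet_Ioi] with u hu
    exact hg_nonneg x hx u hu
  have E2 : ∫⁻ u in Ioi (1:ℝ), ∫⁻ x in Ioi (0:ℝ), ENNReal.ofReal (g x u) =
      ∫⁻ u in Ioi (1:ℝ), ENNReal.ofReal ((B ^ a * Real.Gamma n) * φ u) := by
    refine lintegral_congr_ae ?_
    filter_upwards [ae_restrict_mem measurableSet_Ioi] with u hu
    rw [← ofReal_integral_eq_lintegral_ofReal (step4 u hu) ?_, step3 u hu]
    filter_upwards [ae_restrict_mem measurableSet_Ioi] with x hx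
    exact hg_nonneg x hx u hu
  have E3 : ∫⁻ u in Ioi (1:ℝ), ENNReal.ofReal ((B ^ a * Real.Gamma n) * φ u) =
      ENNReal.ofReal (∫ u in Ioi (1:ℝ), (B ^ a * Real.Gamma n) * φ u) := by
    rw [ofReal_integral_eq_lintegral_ofReal (hφ_int.const_mul _) ?_]
    filter_upwards [ae_restrict_mem measurableSet_Ioi] with u hu
    exact mul_nonneg (by positivity) (hφ_nonneg u hu)
  have hfmeas : AEStronglyMeasurable
      (fun x => Real.exp (-(A - B) * x) * x ^ ((n:ℝ) - a - 1) * upperGamma a (B * x))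
      (volume.restrict (Ioi 0)) := by
    have h1 : AntitoneOn (fun x : ℝ => upperGamma a (B * x)) (Ioi 0) := by
      intro x hx y hy hxy
      exact upperGamma_antitoneOn (by linarith : a ≤ 1)
        (by simp only [mem_Ioi] at hx ⊢; positivity)
        (by simp only [mem_Ioi] at hy ⊢; positivity)
        (mul_le_mul_of_nonneg_left hxy hB.le)
    exact ((Measurable.aemeasurable (by fun_prop : Measurable fun x : ℝ =>
        Real.exp (-(A - B) * x) * x ^ ((n:ℝ) - a - 1))).mul
      (aemeasurable_restrict_of_antitoneOn measurableSet_Ioi h1)).aestronglyMeasurable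
  have hf_nonneg : 0 ≤ᵐ[volume.restrict (Ioi 0)]
      fun x => Real.exp (-(A - B) * x) * x ^ ((n:ℝ) - a - 1) * upperGamma a (B * x) := by
    filter_upwards [ae_restrict_mem measurableSet_Ioi] with x hx
    have hx0 : (0:ℝ) < x := hx
    have h2 := upperGamma_nonneg (a := a) (z := B*x) (by positivity)
    have h3 : (0:ℝ) ≤ Real.exp (-(A-B)*x) * x ^ ((n:ℝ)-a-1) := by positivity
    exact mul_nonneg h3 h2
  have hint_nonneg : 0 ≤ ∫ u in Ioi (1:ℝ), (B ^ a * Real.Gamma n) * φ u := by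
    refine setIntegral_nonneg measurableSet_Ioi (fun u hu => ?_)
    exact mul_nonneg (by positivity) (hφ_nonneg u hu)
  have key : (∫ x in Ioi (0:ℝ),
      Real.exp (-(A - B) * x) * x ^ ((n:ℝ) - a - 1) * upperGamma a (B * x))
      = ∫ u in Ioi (1:ℝ), (B ^ a * Real.Gamma n) * φ u := by
    rw [integral_eq_lintegral_of_nonneg_ae hf_nonneg hfmeas, ← E1, swap, E2, E3,
      ENNReal.toReal_ofReal hint_nonneg]
  rw [key, integral_const_mul]
  -- series expansion
  have hza : |z| < 1 := hz1
  have hnn : n - 1 + 1 = n := Nat.succ_pred_eq_of_pos hn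
  set F : ℕ → ℝ → ℝ := fun k u =>
    (A ^ (-(n:ℝ)) * (((k + (n-1)).choose (n-1) : ℕ) : ℝ) * z ^ k) *
      (u ^ (a - 1 - (n:ℝ)) * (1 - 1/u) ^ k) with hFdef
  have he2 : a - 1 - (n:ℝ) ≤ -2 := by linarith
  -- 7a : pointwise HasSum
  have h7a : ∀ u ∈ Ioi (1:ℝ), HasSum (fun k => F k u) (φ u) := by
    intro u hu
    have hu1 : (1:ℝ) < u := hu
    have hu0 : (0:ℝ) < u := by linarith
    have hcu0 : 0 < A - B + B * u := hc u hu1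
    have hiu0 : 0 < 1/u := by positivity
    have hiu1 : 1/u < 1 := by rw [div_lt_one hu0]; exact hu1
    set w : ℝ := z * (1 - 1/u) with hwdef
    have hw : ‖w‖ < 1 := by
      rw [Real.norm_eq_abs, hwdef, abs_mul, abs_of_nonneg (by linarith : (0:ℝ) ≤ 1 - 1/u)]
      nlinarith [abs_nonneg z]
    have hs := hasSum_choose_mul_geometric_of_norm_lt_one (𝕜 := ℝ) (n-1) hw
    rw [hnn] at hs
    have hs2 := hs.mul_left (A ^ (-(n:ℝ)) * u ^ (a - 1 - (n:ℝ)))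
    have hfe : (fun k => F k u) = fun k =>
        (A ^ (-(n:ℝ)) * u ^ (a - 1 - (n:ℝ))) * ((((k + (n-1)).choose (n-1) : ℕ) : ℝ) * w ^ k) := by
      funext k
      simp only [hFdef, hwdef]
      rw [mul_pow]
      ring
    rw [hfe]
    have h1w : (1:ℝ) - w = (A - B + B*u)/(A*u) := by
      simp only [hwdef, hzdef]
      field_simp
      ring
    have hφeq : φ u = (A ^ (-(n:ℝ)) * u ^ (a - 1 - (n:ℝ))) * (1 / (1-w) ^ n) := by
      have e1 : A ^ (-(n:ℝ)) = (A^n)⁻¹ := by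
        rw [Real.rpow_neg hA.le, Real.rpow_natCast]
      have e2 : u ^ (a-1-(n:ℝ)) = u ^ (a-1) * (u^n)⁻¹ := by
        rw [← Real.rpow_natCast u n, ← Real.rpow_neg hu0.le, ← Real.rpow_add hu0]
        exact congrArg (fun p : ℝ => u ^ p) (by ring)
      rw [hφdef, e1, e2, h1w, div_pow]
      have hAu : (A*u)^n ≠ 0 := by positivity
      have hcn : (A-B+B*u)^n ≠ 0 := by positivity
      field_simp
      rw [mul_pow]
      ring_nf; field_simp
      rw [← mul_pow, one_div, inv_mul_cancel₀ hcu0.ne', one_pow]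
    rw [hφeq]
    exact hs2
  -- 7b : integrability of each term
  have hbound : ∀ (k : ℕ) (u : ℝ), u ∈ Ioi (1:ℝ) →
      ‖F k u‖ ≤ ‖A ^ (-(n:ℝ)) * (((k + (n-1)).choose (n-1) : ℕ) : ℝ) * z ^ k‖ *
        u ^ (a - 1 - (n:ℝ)) := by
    intro k u hu
    have hu1 : (1:ℝ) < u := hu
    have hu0 : (0:ℝ) < u := by linarith
    have hiu1 : 1/u < 1 := by rw [div_lt_one hu0]; exact hu1
    have hiu0 : (0:ℝ) < 1/u := by positivity
    have h1 : (0:ℝ) ≤ 1 - 1/u := by linarith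
    have h2 : (1 - 1/u) ^ k ≤ 1 := pow_le_one₀ h1 (by linarith)
    simp only [hFdef]
    rw [norm_mul]
    refine mul_le_mul_of_nonneg_left ?_ (norm_nonneg _)
    rw [Real.norm_eq_abs, abs_of_nonneg (by positivity)]
    calc u ^ (a-1-(n:ℝ)) * (1-1/u)^k ≤ u ^ (a-1-(n:ℝ)) * 1 := by
          exact mul_le_mul_of_nonneg_left h2 (by positivity)
      _ = u ^ (a-1-(n:ℝ)) := mul_one _
  have h7b : ∀ k : ℕ, IntegrableOn (F k) (Ioi 1) := by
    intro k
    refine Integrable.mono'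
      ((integrableOn_Ioi_rpow_of_lt (by linarith : a - 1 - (n:ℝ) < -1) one_pos).const_mul
        (‖A ^ (-(n:ℝ)) * (((k + (n-1)).choose (n-1) : ℕ) : ℝ) * z ^ k‖)) ?_ ?_
    · exact Measurable.aestronglyMeasurable (by fun_prop)
    · filter_upwards [ae_restrict_mem measurableSet_Ioi] with u hu
      exact hbound k u hu
  -- value of ∫ u^e du
  have hJe : ∫ u in Ioi (1:ℝ), u ^ (a - 1 - (n:ℝ)) = 1 / ((n:ℝ) - a) := by
    rw [integral_Ioi_rpow_of_lt (by linarith : a - 1 - (n:ℝ) < -1) one_pos, Real.one_rpow]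
    rw [show a - 1 - (n:ℝ) + 1 = -((n:ℝ) - a) by ring, div_neg, neg_div, neg_neg]
  -- 7c : summability of integrals of norms
  have h7c : Summable fun k => ∫ u in Ioi (1:ℝ), ‖F k u‖ := by
    have hmaj : Summable fun k : ℕ =>
        (|A ^ (-(n:ℝ))| * (1/((n:ℝ) - a))) * ((((k + (n-1)).choose (n-1) : ℕ) : ℝ) * |z| ^ k) := by
      refine Summable.mul_left _ ?_
      exact summable_choose_mul_geometric_of_norm_lt_one (n-1)
        (by rw [Real.norm_eq_abs, abs_abs]; exact hza)
    refine Summable.of_nonneg_of_le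
      (fun k => integral_nonneg (fun u => norm_nonneg _)) (fun k => ?_) hmaj
    have hle : ∫ u in Ioi (1:ℝ), ‖F k u‖ ≤
        ∫ u in Ioi (1:ℝ), ‖A ^ (-(n:ℝ)) * (((k + (n-1)).choose (n-1) : ℕ) : ℝ) * z ^ k‖ *
          u ^ (a - 1 - (n:ℝ)) := by
      refine integral_mono_of_nonneg (ae_of_all _ (fun u => norm_nonneg _))
        (((integrableOn_Ioi_rpow_of_lt (by linarith : a - 1 - (n:ℝ) < -1) one_pos).const_mul
          _)) ?_
      filter_upwards [ae_restrict_mem measurableSet_Ioi] with u hu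
      exact hbound k u hu
    refine le_trans hle ?_
    rw [integral_const_mul, hJe]
    rw [show ‖A ^ (-(n:ℝ)) * (((k + (n-1)).choose (n-1) : ℕ) : ℝ) * z ^ k‖ =
      |A ^ (-(n:ℝ))| * (((k + (n-1)).choose (n-1) : ℕ) : ℝ) * |z| ^ k from by
        rw [Real.norm_eq_abs, abs_mul, abs_mul, abs_pow]
        congr 2
        exact Nat.abs_cast _]
    apply le_of_eq
    ring
  -- interchange sum and integral
  have hswap2 : ∫ u in Ioi (1:ℝ), φ u = ∑' k, ∫ u in Ioi (1:ℝ), F k u := by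
    refine Eq.symm ((integral_tsum_of_summable_integral_norm h7b h7c).trans ?_)
    exact setIntegral_congr_fun measurableSet_Ioi (fun u hu => (h7a u hu).tsum_eq)
  -- value of each term
  have h7d : ∀ k : ℕ, ∫ u in Ioi (1:ℝ), F k u =
      (A ^ (-(n:ℝ)) * (((k + (n-1)).choose (n-1) : ℕ) : ℝ) * z ^ k) *
        ((k.factorial : ℝ) / poch ((n:ℝ) - a) (k+1)) := by
    intro k
    have e0 : ∫ u in Ioi (1:ℝ), F k u =
        (A ^ (-(n:ℝ)) * (((k + (n-1)).choose (n-1) : ℕ) : ℝ) * z ^ k) *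
          ∫ u in Ioi (1:ℝ), u ^ (a - 1 - (n:ℝ)) * (1 - 1/u) ^ k := by
      rw [← integral_const_mul]
    rw [e0]
    congr 1
    have e1 : EqOn (fun u : ℝ => u ^ (a - 1 - (n:ℝ)) * (1 - 1/u) ^ k)
        (fun u : ℝ => ∑ j ∈ Finset.range (k+1),
          ((k.choose j : ℝ) * (-1)^j) * u ^ (a - 1 - (n:ℝ) - (j:ℝ))) (Ioi 1) := by
      intro u hu
      have hu1 : (1:ℝ) < u := hu
      have hu0 : (0:ℝ) < u := by linarith
      simp only
      rw [show (1:ℝ) - 1/u = -(1/u) + 1 by ring, add_pow, Finset.mul_sum]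
      refine Finset.sum_congr rfl (fun j hj => ?_)
      have e3 : u ^ (a-1-(n:ℝ)) * (u⁻¹)^j = u ^ (a-1-(n:ℝ)-(j:ℝ)) := by
        rw [inv_pow, ← Real.rpow_natCast u j, ← Real.rpow_neg hu0.le, ← Real.rpow_add hu0]
        exact congrArg (fun p : ℝ => u ^ p) (by ring)
      rw [one_pow, mul_one, show (-(1/u))^j = (-1)^j * (u⁻¹)^j from by
        rw [one_div, neg_pow]]
      linear_combination ((-1:ℝ)^j * (k.choose j : ℝ)) * e3
    have e5 : (∫ u in Ioi (1:ℝ), u ^ (a - 1 - (n:ℝ)) * (1 - 1/u) ^ k) =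
        ∑ j ∈ Finset.range (k+1), ∫ u in Ioi (1:ℝ),
          ((k.choose j : ℝ) * (-1)^j) * u ^ (a - 1 - (n:ℝ) - (j:ℝ)) := by
      rw [setIntegral_congr_fun measurableSet_Ioi e1]
      exact integral_finset_sum _ (fun j hj => ((integrableOn_Ioi_rpow_of_lt
        (by linarith [Nat.cast_nonneg (α := ℝ) j] : a - 1 - (n:ℝ) - (j:ℝ) < -1)
        one_pos).const_mul _))
    rw [e5]
    have e4 : ∀ j ∈ Finset.range (k+1),
        (∫ u in Ioi (1:ℝ), ((k.choose j : ℝ) * (-1)^j) * u ^ (a-1-(n:ℝ)-(j:ℝ))) =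
          (k.choose j : ℝ) * (-1)^j / (((n:ℝ) - a) + (j:ℝ)) := by
      intro j hj
      rw [integral_const_mul, integral_Ioi_rpow_of_lt
        (by linarith [Nat.cast_nonneg (α := ℝ) j] : a - 1 - (n:ℝ) - (j:ℝ) < -1) one_pos,
        Real.one_rpow,
        show a-1-(n:ℝ)-(j:ℝ)+1 = -(((n:ℝ)-a)+(j:ℝ)) by ring, div_neg, neg_div, neg_neg]
      ring
    rw [Finset.sum_congr rfl e4, sum_choose_inv k ((n:ℝ)-a) hm0]
  -- cast identity for poch n
  have hpochn : ∀ k : ℕ,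
      poch (n:ℝ) k = (((k + (n-1)).choose (n-1) : ℕ) : ℝ) * (k.factorial : ℝ) := by
    intro k
    have h := poch_nat_cast (n-1) k
    rw [show ((n-1 : ℕ) : ℝ) + 1 = (n:ℝ) from by rw [Nat.cast_sub hn]; push_cast; ring] at h
    exact h
  -- per-term rearrangement
  have hterm : ∀ k : ℕ,
      (A ^ (-(n:ℝ)) * (((k + (n-1)).choose (n-1) : ℕ) : ℝ) * z ^ k) *
        ((k.factorial : ℝ) / poch ((n:ℝ) - a) (k+1)) =
      (A ^ (-(n:ℝ)) / ((n:ℝ) - a)) *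
        (poch (n:ℝ) k / poch ((n:ℝ) - a + 1) k * z ^ k) := by
    intro k
    have h1 : poch ((n:ℝ)-a) (k+1) = ((n:ℝ)-a) * poch ((n:ℝ)-a+1) k := poch_succ' _ _
    have hp1 : poch ((n:ℝ)-a+1) k ≠ 0 := ne_of_gt (poch_pos (by linarith) k)
    rw [h1, hpochn k]
    field_simp
  rw [hswap2, tsum_congr (fun k => (h7d k).trans (hterm k)), tsum_mul_left]
  ring





end helpers

/-- The integral `I₁` evaluated in the proof of Theorem 5 (eq. (69)): for `0 ≤ i ≤ N−1` and
`A, B > 0` with `|1 − B/A| < 1`,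
`∫_0^∞ e^{−(A−B)x} x^{2N−i−2} Γ(i−N+1, Bx) dx
  = B^{i+1−N} A^{−N} Γ(N)/(2N−i−1) · ₂F₁(1, N; 2N−i; 1 − B/A)`. -/
theorem integral_incGamma_hyp2F1
    (N : ℕ) (hN : 1 ≤ N) (i : ℕ) (hi : i ≤ N - 1)
    (A B : ℝ) (hA : 0 < A) (hB : 0 < B) (hAB : |1 - B / A| < 1) :
    (∫ x in Set.Ioi (0 : ℝ),
        Real.exp (-(A - B) * x) * x ^ (2 * (N : ℝ) - (i : ℝ) - 2) *
          upperGamma ((i : ℝ) - (N : ℝ) + 1) (B * x)) =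
      B ^ ((i : ℝ) + 1 - (N : ℝ)) * A ^ (-(N : ℝ)) * Real.Gamma N /
          (2 * (N : ℝ) - (i : ℝ) - 1) *
        hyp2F1 1 N (2 * (N : ℝ) - (i : ℝ)) (1 - B / A) := by
  have hiN : i + 1 ≤ N := by omega
  have hiR : (i:ℝ) + 1 ≤ (N:ℝ) := by exact_mod_cast hiN
  have ha : (i:ℝ) - (N:ℝ) + 1 ≤ 0 := by linarith
  have hN1 : (1:ℝ) ≤ (N:ℝ) := by exact_mod_cast hN
  have h := main_general N hN ((i:ℝ) - (N:ℝ) + 1) ha A B hA hB hAB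
  rw [show (N:ℝ) - ((i:ℝ) - (N:ℝ) + 1) - 1 = 2*(N:ℝ) - (i:ℝ) - 2 by ring] at h
  rw [h, show (N:ℝ) - ((i:ℝ) - (N:ℝ) + 1) + 1 = 2*(N:ℝ) - (i:ℝ) by ring,
    show (N:ℝ) - ((i:ℝ) - (N:ℝ) + 1) = 2*(N:ℝ) - (i:ℝ) - 1 by ring,
    show (i:ℝ) - (N:ℝ) + 1 = (i:ℝ) + 1 - (N:ℝ) by ring]
  congr 1
  rw [hyp2F1]
  refine tsum_congr (fun k => ?_)
  rw [poch_one]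
  have hp : poch (2*(N:ℝ) - (i:ℝ)) k ≠ 0 :=
    ne_of_gt (poch_pos (by linarith) k)
  have hf : (k.factorial : ℝ) ≠ 0 := by positivity
  field_simp
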